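/- Let A be a p-adically complete p-torsion-free O_C-algebra, ρ ∈ O_C with v_p(ρ) ≥ 1/(p−1), e ∈ A topologically nilpotent and a non-zero divisor, and V a finite free rank-r A-module with γ acting by P = exp(−(ζ_p−1)Θ), Θ topologically nilpotent. Write M_0(V) = V ⊗_A A[ρX]^∧_pd and M_0^+(V) = V ⊗_A (⨁^∧_{n≥1} A ρ^n X^{[n]}). Define g_V: M_0(V) → M_0(V) by sending v⃗ ⊗ Σ_n b_n ρ^n X^{[n]} to v⃗ ⊗ Σ_{n≥1} a_n ρ^n X^{[n]} where a_{n+1} = b_n + Σ_{l≥1}(−1)^l Σ_{m_1,…,m_l ≥ 1} P^l b_{n+m_1+⋯+m_l} (ρ^{[m_1+1]}/ρ)⋯(ρ^{[m_l+1]}/ρ) e^{m_1+⋯+m_l}. Then g_V takes values in M_0^+(V) and induces an A-module isomorphism g_V: M_0(V) → M_0^+(V). -/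

import Mathlib

open Filter Topology

noncomputable section

/-- The matrices `Q_m = Σ_{l=1}^m Σ_{m_1+⋯+m_l=m, m_i≥1} (−1)^l P^l ∏_i (ρ^{[m_i+1]}/ρ)`
(with `ρq k = ρ^{[k+1]}/ρ`) appearing in the definition of `g_V`. -/
def QQmat (A : Type*) [CommRing A] (r : ℕ) (P : Matrix (Fin r) (Fin r) A)
    (ρq : ℕ → A) (m : ℕ) : Matrix (Fin r) (Fin r) A :=
  ∑ l ∈ Finset.Icc 1 m,
    ∑ c ∈ (Finset.Nat.antidiagonalTuple l m).filter (fun c => ∀ i, 1 ≤ c i),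
      (((-1 : A) ^ l) * ∏ i, ρq (c i)) • (P ^ l)

/-- The operator `g_V` of Construction 3.5: on coefficient sequences (w.r.t. the basis
`ρ^n X^{[n]}` of `M_0(V) = V ⊗_A A[ρX]^∧_pd`), `(g_V b)_0 = 0` and
`(g_V b)_{n+1} = b_n + Σ_{l≥1}(−1)^l Σ_{m_1,…,m_l≥1} P^l b_{n+m_1+⋯+m_l}
(ρ^{[m_1+1]}/ρ)⋯(ρ^{[m_l+1]}/ρ) e^{m_1+⋯+m_l}`. -/
def gV (A : Type*) [CommRing A] [UniformSpace A] [IsUniformAddGroup A]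
    [IsTopologicalRing A] (r : ℕ) (P : Matrix (Fin r) (Fin r) A)
    (ρq : ℕ → A) (e : A) (b : ℕ → Fin r → A) : ℕ → Fin r → A := fun k =>
  match k with
  | 0 => 0
  | n + 1 => fun j =>
      b n j + ∑' m : ℕ, e ^ (m + 1) * ((QQmat A r P ρq (m + 1)).mulVec (b (n + m + 1))) j

namespace Stmt17

variable {A : Type*} [CommRing A] [UniformSpace A] [IsUniformAddGroup A] [IsTopologicalRing A]

/-- generic `T` operator -/
def Tgen {r : ℕ} (Q : ℕ → Matrix (Fin r) (Fin r) A) (e : A)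
    (b : ℕ → Fin r → A) (n : ℕ) (j : Fin r) : A :=
  ∑' m : ℕ, e ^ (m + 1) * ((Q (m + 1)).mulVec (b (n + m + 1))) j

lemma gV_succ (A : Type*) [CommRing A] [UniformSpace A] [IsUniformAddGroup A]
    [IsTopologicalRing A] (r : ℕ) (P : Matrix (Fin r) (Fin r) A)
    (ρq : ℕ → A) (e : A) (b : ℕ → Fin r → A) (n : ℕ) (j : Fin r) :
    gV A r P ρq e b (n + 1) j = b n j + Tgen (QQmat A r P ρq) e b n j := rfl

variable {I : Ideal A}

lemma pow_mem_nhds (hopen : ∀ n : ℕ, IsOpen ((I ^ n : Ideal A) : Set A)) (k : ℕ) :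
    ((I ^ k : Ideal A) : Set A) ∈ 𝓝 (0 : A) := (hopen k).mem_nhds (Submodule.zero_mem _)

lemma tendsto_iff_mem (hopen : ∀ n : ℕ, IsOpen ((I ^ n : Ideal A) : Set A))
    (hbasis : ∀ s ∈ 𝓝 (0 : A), ∃ n : ℕ, ((I ^ n : Ideal A) : Set A) ⊆ s)
    {f : ℕ → A} : Tendsto f atTop (𝓝 0) ↔ ∀ k : ℕ, ∀ᶠ n in atTop, f n ∈ I ^ k := by
  constructor
  · intro h k
    exact h (pow_mem_nhds hopen k)
  · intro h
    rw [tendsto_def]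
    intro s hs
    obtain ⟨k, hk⟩ := hbasis s hs
    exact ((h k).mono fun n hn => hk hn)

lemma hasSum_mem (hopen : ∀ n : ℕ, IsOpen ((I ^ n : Ideal A) : Set A))
    {ι : Type*} {f : ι → A} {a : A} (hf : HasSum f a) {k : ℕ}
    (h : ∀ i, f i ∈ I ^ k) : a ∈ I ^ k := by
  have hc : IsClosed (((I ^ k : Ideal A).toAddSubgroup : AddSubgroup A) : Set A) :=
    AddSubgroup.isClosed_of_isOpen _ (by simpa using hopen k)
  have := hc.mem_of_tendsto hf
    (Filter.Eventually.of_forall fun s => Submodule.sum_mem _ fun i _ => h i)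
  simpa using this

lemma summable_of_mem [CompleteSpace A]
    (hbasis : ∀ s ∈ 𝓝 (0 : A), ∃ n : ℕ, ((I ^ n : Ideal A) : Set A) ⊆ s)
    {ι : Type*} {f : ι → A}
    (h : ∀ k : ℕ, ∃ s : Finset ι, ∀ i ∉ s, f i ∈ I ^ k) : Summable f := by
  classical
  rw [summable_iff_vanishing]
  intro U hU
  obtain ⟨k, hk⟩ := hbasis U hU
  obtain ⟨s, hs⟩ := h k
  exact ⟨s, fun t ht => hk (Submodule.sum_mem _ fun i hi =>
    hs i (Finset.disjoint_left.mp ht hi))⟩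

lemma eq_zero_of_mem [T2Space A]
    (hbasis : ∀ s ∈ 𝓝 (0 : A), ∃ n : ℕ, ((I ^ n : Ideal A) : Set A) ⊆ s)
    {x : A} (h : ∀ k : ℕ, x ∈ I ^ k) : x = 0 := by
  by_contra hx
  obtain ⟨k, hk⟩ := hbasis {x}ᶜ
    (isOpen_compl_singleton.mem_nhds (by simpa using Ne.symm hx))
  exact hk (h k) rfl

variable {r : ℕ} {Q : ℕ → Matrix (Fin r) (Fin r) A} {e : A}

lemma mulVec_mem {k : ℕ} (M : Matrix (Fin r) (Fin r) A) {v : Fin r → A}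
    (h : ∀ i, v i ∈ I ^ k) (j : Fin r) : (M.mulVec v) j ∈ I ^ k := by
  simp only [Matrix.mulVec, dotProduct]
  exact Submodule.sum_mem _ fun i _ => Ideal.mul_mem_left _ _ (h i)

variable [CompleteSpace A] [T2Space A]

lemma Tgen_summable
    (hbasis : ∀ s ∈ 𝓝 (0 : A), ∃ n : ℕ, ((I ^ n : Ideal A) : Set A) ⊆ s)
    (habs : ∀ k : ℕ, ∃ M : ℕ, ∀ m, M ≤ m → e ^ m ∈ I ^ k)
    (b : ℕ → Fin r → A) (n : ℕ) (j : Fin r) :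
    Summable (fun m : ℕ => e ^ (m + 1) * ((Q (m + 1)).mulVec (b (n + m + 1))) j) := by
  apply summable_of_mem hbasis
  intro k
  obtain ⟨M, hM⟩ := habs k
  exact ⟨Finset.range M, fun m hm =>
    Ideal.mul_mem_right _ _ (hM (m + 1) (by simp at hm; omega))⟩

lemma Tgen_mem
    (hopen : ∀ n : ℕ, IsOpen ((I ^ n : Ideal A) : Set A))
    (hbasis : ∀ s ∈ 𝓝 (0 : A), ∃ n : ℕ, ((I ^ n : Ideal A) : Set A) ⊆ s)
    (habs : ∀ k : ℕ, ∃ M : ℕ, ∀ m, M ≤ m → e ^ m ∈ I ^ k)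
    {b : ℕ → Fin r → A} {n : ℕ} {k : ℕ}
    (h : ∀ m i, b (n + m + 1) i ∈ I ^ k) (j : Fin r) :
    Tgen Q e b n j ∈ I ^ k :=
  hasSum_mem hopen (Tgen_summable hbasis habs b n j).hasSum fun m =>
    Ideal.mul_mem_left _ _ (mulVec_mem _ (h m) j)

lemma Tgen_sub
    (hbasis : ∀ s ∈ 𝓝 (0 : A), ∃ n : ℕ, ((I ^ n : Ideal A) : Set A) ⊆ s)
    (habs : ∀ k : ℕ, ∃ M : ℕ, ∀ m, M ≤ m → e ^ m ∈ I ^ k)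
    (b b' : ℕ → Fin r → A) (n : ℕ) (j : Fin r) :
    Tgen Q e (fun n => b n - b' n) n j = Tgen Q e b n j - Tgen Q e b' n j := by
  have h1 := (Tgen_summable (Q := Q) hbasis habs b n j).hasSum
  have h2 := (Tgen_summable (Q := Q) hbasis habs b' n j).hasSum
  refine (tsum_congr fun m => ?_).trans (h1.sub h2).tsum_eq
  simp only [Matrix.mulVec, dotProduct, Pi.sub_apply]
  rw [← mul_sub, ← Finset.sum_sub_distrib]
  congr 1
  apply Finset.sum_congr rfl
  intro i _
  ring

lemma Tgen_factor
    (hbasis : ∀ s ∈ 𝓝 (0 : A), ∃ n : ℕ, ((I ^ n : Ideal A) : Set A) ⊆ s)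
    (habs : ∀ k : ℕ, ∃ M : ℕ, ∀ m, M ≤ m → e ^ m ∈ I ^ k)
    {b Y : ℕ → Fin r → A} {k : ℕ} (hY : ∀ n i, b n i = e ^ k * Y n i)
    (n : ℕ) (j : Fin r) :
    Tgen Q e b n j
      = e ^ (k + 1) * ∑' m : ℕ, e ^ m * ((Q (m + 1)).mulVec (Y (n + m + 1))) j := by
  have hs : Summable (fun m : ℕ => e ^ m * ((Q (m + 1)).mulVec (Y (n + m + 1))) j) := by
    apply summable_of_mem hbasis
    intro κ
    obtain ⟨M, hM⟩ := habs κ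
    exact ⟨Finset.range M, fun m hm =>
      Ideal.mul_mem_right _ _ (hM m (by simp at hm; omega))⟩
  calc Tgen Q e b n j
      = ∑' m : ℕ, e ^ (k + 1) * (e ^ m * ((Q (m + 1)).mulVec (Y (n + m + 1))) j) := by
        apply tsum_congr
        intro m
        simp only [Matrix.mulVec, dotProduct, hY, Finset.mul_sum]
        apply Finset.sum_congr rfl
        intro i _
        ring
    _ = e ^ (k + 1) * ∑' m : ℕ, e ^ m * ((Q (m + 1)).mulVec (Y (n + m + 1))) j :=
        Summable.tsum_mul_left _ hs

end Stmt17

/-- Let `A` be a `p`-adically complete `p`-torsion-free `𝒪_C`-algebra,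
`ρ` with `v_p(ρ) ≥ 1/(p−1)`, `e ∈ A` topologically nilpotent and a non-zero-divisor, and
`V = A^r` with `γ` acting by `P = exp(−(ζ_p−1)Θ)`, `Θ` topologically nilpotent.  With
`M_0(V)` the module of coefficient sequences tending to `0` and
`M_0^+(V)` those with vanishing constant term, the map `g_V` above takes values in
`M_0^+(V)` and induces an `A`-module isomorphism `g_V : M_0(V) → M_0^+(V)`. -/
theorem stmt_17 (p : ℕ) [Fact (Nat.Prime p)] (r : ℕ)
    (A : Type*) [CommRing A] [UniformSpace A] [IsUniformAddGroup A]
    [IsTopologicalRing A] [CompleteSpace A] [T2Space A]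
    [Algebra ℤ_[p] A]
    (hadic : IsAdic (Ideal.span {(p : A)}))
    (htor : ∀ x : A, (p : A) * x = 0 → x = 0)
    (ρ : A) (hρsmall : ∃ c : A, ρ ^ (p - 1) = (p : A) * c)
    (hρreg : ∀ x : A, ρ * x = 0 → x = 0)
    (ρpd : ℕ → A) (hρpd0 : ρpd 0 = 1) (hρpd1 : ρpd 1 = ρ)
    (hρpdfac : ∀ m : ℕ, (m.factorial : A) * ρpd m = ρ ^ m)
    (ρq : ℕ → A) (hρq : ∀ k : ℕ, ρ * ρq k = ρpd (k + 1))
    (e : A) (he : Tendsto (fun n : ℕ => e ^ n) atTop (𝓝 0))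
    (hereg : ∀ x : A, e * x = 0 → x = 0)
    (ζ : A) (hζ : IsPrimitiveRoot ζ p)
    (εpd : ℕ → A) (hεpd0 : εpd 0 = 1) (hεpd1 : εpd 1 = ζ - 1)
    (hεpdfac : ∀ k : ℕ, (k.factorial : A) * εpd k = (ζ - 1) ^ k)
    (Θ : Matrix (Fin r) (Fin r) A)
    (hΘ : ∀ i j, Tendsto (fun n : ℕ => (Θ ^ n) i j) atTop (𝓝 0))
    (P : Matrix (Fin r) (Fin r) A)
    (hP : ∀ i j, HasSum (fun l : ℕ => ((-1 : A) ^ l * εpd l) * (Θ ^ l) i j) (P i j)) :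
    (∀ b : ℕ → Fin r → A, Tendsto b atTop (𝓝 0) →
      gV A r P ρq e b 0 = 0 ∧ Tendsto (gV A r P ρq e b) atTop (𝓝 0)) ∧
    Set.InjOn (gV A r P ρq e) {b | Tendsto b atTop (𝓝 0)} ∧
    Set.SurjOn (gV A r P ρq e) {b | Tendsto b atTop (𝓝 0)}
      {a | Tendsto a atTop (𝓝 0) ∧ a 0 = 0} := by
  classical
  obtain ⟨hopen, hbasis⟩ := isAdic_iff.mp hadic
  set I : Ideal A := Ideal.span {(p : A)} with hIdef
  set Q : ℕ → Matrix (Fin r) (Fin r) A := QQmat A r P ρq with hQdef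
  have habs : ∀ k : ℕ, ∃ M : ℕ, ∀ m, M ≤ m → e ^ m ∈ I ^ k := fun k =>
    eventually_atTop.mp ((Stmt17.tendsto_iff_mem hopen hbasis).mp he k)
  -- pi-version of the tendsto criterion
  have tendsto_pi_iff : ∀ b : ℕ → Fin r → A,
      Tendsto b atTop (𝓝 0) ↔ ∀ k : ℕ, ∀ᶠ n in atTop, ∀ i, b n i ∈ I ^ k := by
    intro b
    rw [tendsto_pi_nhds]
    constructor
    · intro h k
      rw [eventually_all]
      intro i
      exact (Stmt17.tendsto_iff_mem hopen hbasis).mp (by simpa using h i) k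
    · intro h i
      simp only [Pi.zero_apply]
      exact (Stmt17.tendsto_iff_mem hopen hbasis).mpr fun k => (h k).mono fun n hn => hn i
  -- Part 1
  have part1 : ∀ b : ℕ → Fin r → A, Tendsto b atTop (𝓝 0) →
      gV A r P ρq e b 0 = 0 ∧ Tendsto (gV A r P ρq e b) atTop (𝓝 0) := by
    intro b hb
    refine ⟨rfl, ?_⟩
    rw [tendsto_pi_iff]
    intro k
    obtain ⟨N, hN⟩ := eventually_atTop.mp ((tendsto_pi_iff b).mp hb k)
    rw [eventually_atTop]
    refine ⟨N + 1, fun n hn i => ?_⟩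
    obtain ⟨m, rfl⟩ : ∃ m, n = m + 1 := ⟨n - 1, by omega⟩
    rw [Stmt17.gV_succ]
    exact Ideal.add_mem _ (hN m (by omega) i)
      (Stmt17.Tgen_mem hopen hbasis habs (fun m' i' => hN _ (by omega) i') i)
  refine ⟨part1, ?_, ?_⟩
  -- Part 2 : injectivity
  · intro b hb b' hb' heq
    set d : ℕ → Fin r → A := fun n => b n - b' n with hd
    have key : ∀ n j, d n j = -(Stmt17.Tgen Q e d n j) := by
      intro n j
      have h1 := congrFun (congrFun heq (n + 1)) j
      rw [Stmt17.gV_succ, Stmt17.gV_succ] at h1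
      have h2 : Stmt17.Tgen Q e d n j
          = Stmt17.Tgen Q e b n j - Stmt17.Tgen Q e b' n j :=
        Stmt17.Tgen_sub hbasis habs b b' n j
      have hdv : d n j = b n j - b' n j := rfl
      rw [hdv]
      rw [hQdef] at h2
      linear_combination h1 + h2
    have pow : ∀ k : ℕ, ∃ Y : ℕ → Fin r → A, ∀ n i, d n i = e ^ k * Y n i := by
      intro k
      induction k with
      | zero => exact ⟨d, fun n i => by rw [pow_zero, one_mul]⟩
      | succ k ih =>
        obtain ⟨Y, hY⟩ := ih
        refine ⟨fun n i => -(∑' m : ℕ, e ^ m * ((Q (m + 1)).mulVec (Y (n + m + 1))) i),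
          fun n i => ?_⟩
        rw [key n i, Stmt17.Tgen_factor hbasis habs hY n i]
        ring
    have dzero : ∀ n i, d n i = 0 := by
      intro n i
      apply Stmt17.eq_zero_of_mem hbasis
      intro k
      obtain ⟨M, hM⟩ := habs k
      obtain ⟨Y, hY⟩ := pow M
      rw [hY n i]
      exact Ideal.mul_mem_right _ _ (hM M le_rfl)
    funext n
    funext i
    have := dzero n i
    rw [hd] at this
    simpa [sub_eq_zero] using this
  -- Part 3 : surjectivity
  · intro a ha
    obtain ⟨haT, ha0⟩ := ha
    let C : ℕ → ℕ → Fin r → A :=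
      Nat.rec (fun n => a (n + 1)) (fun _ Ck n j => -(Stmt17.Tgen Q e Ck n j))
    have hC0 : ∀ n, C 0 n = a (n + 1) := fun n => rfl
    have hCs : ∀ k n j, C (k + 1) n j = -(Stmt17.Tgen Q e (C k) n j) := fun k n j => rfl
    have powC : ∀ k : ℕ, ∃ Y : ℕ → Fin r → A, ∀ n i, C k n i = e ^ k * Y n i := by
      intro k
      induction k with
      | zero => exact ⟨fun n => a (n + 1), fun n i => by rw [pow_zero, one_mul]; rfl⟩
      | succ k ih =>
        obtain ⟨Y, hY⟩ := ih
        refine ⟨fun n i => -(∑' m : ℕ, e ^ m * ((Q (m + 1)).mulVec (Y (n + m + 1))) i),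
          fun n i => ?_⟩
        rw [hCs k n i, Stmt17.Tgen_factor hbasis habs hY n i]
        ring
    choose Y hY using powC
    have hCk_mem : ∀ κ : ℕ, ∃ M : ℕ, ∀ k, M ≤ k → ∀ n i, C k n i ∈ I ^ κ := by
      intro κ
      obtain ⟨M, hM⟩ := habs κ
      exact ⟨M, fun k hk n i => by
        rw [hY k n i]; exact Ideal.mul_mem_right _ _ (hM k hk)⟩
    have hsumC : ∀ n i, Summable (fun k => C k n i) := by
      intro n i
      apply Stmt17.summable_of_mem hbasis
      intro κ
      obtain ⟨M, hM⟩ := hCk_mem κ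
      exact ⟨Finset.range M, fun k hk => hM k (by simp at hk; omega) n i⟩
    set b : ℕ → Fin r → A := fun n i => ∑' k, C k n i with hbdef
    have hCtend : ∀ k κ : ℕ, ∀ᶠ n in atTop, ∀ i, C k n i ∈ I ^ κ := by
      intro k
      induction k with
      | zero =>
        intro κ
        obtain ⟨N, hN⟩ := eventually_atTop.mp ((tendsto_pi_iff a).mp haT κ)
        exact eventually_atTop.mpr ⟨N, fun n hn i => by rw [hC0]; exact hN (n + 1) (by omega) i⟩
      | succ k ih =>
        intro κ
        obtain ⟨N, hN⟩ := eventually_atTop.mp (ih κ)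
        refine eventually_atTop.mpr ⟨N, fun n hn i => ?_⟩
        rw [hCs]
        exact neg_mem (Stmt17.Tgen_mem hopen hbasis habs (fun m' i' => hN _ (by omega) i') i)
    have hbtend : Tendsto b atTop (𝓝 0) := by
      rw [tendsto_pi_iff]
      intro κ
      obtain ⟨M, hM⟩ := hCk_mem κ
      have hhead : ∀ᶠ n in atTop, ∀ k ∈ Finset.range M, ∀ i, C k n i ∈ I ^ κ := by
        rw [eventually_all_finset]
        intro k _
        exact hCtend k κ
      refine hhead.mono fun n hn i => ?_
      have hsplit := Summable.sum_add_tsum_nat_add (f := fun k => C k n i) M (hsumC n i)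
      have hbv : b n i = ∑' k, C k n i := rfl
      rw [hbv, ← hsplit]
      refine Ideal.add_mem _ (Submodule.sum_mem _ fun k hk => hn k hk i)
        (Stmt17.hasSum_mem hopen ((summable_nat_add_iff M).mpr (hsumC n i)).hasSum
          fun k => hM (k + M) (by omega) n i)
    have hfix : ∀ n j, Stmt17.Tgen Q e b n j = a (n + 1) j - b n j := by
      intro n j
      set F : ℕ → ℕ → A :=
        fun m k => e ^ (m + 1) * ((Q (m + 1)).mulVec (C k (n + m + 1))) j with hF
      have hXs : ∀ m : ℕ, Summable (fun k => ((Q (m + 1)).mulVec (C k (n + m + 1))) j) := by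
        intro m
        apply Stmt17.summable_of_mem hbasis
        intro κ
        obtain ⟨M, hM⟩ := hCk_mem κ
        exact ⟨Finset.range M, fun k hk =>
          Stmt17.mulVec_mem _ (fun i => hM k (by simp at hk; omega) _ i) j⟩
      have huncurry : Summable (Function.uncurry F) := by
        apply Stmt17.summable_of_mem hbasis
        intro κ
        obtain ⟨M, hM⟩ := habs κ
        obtain ⟨M', hM'⟩ := hCk_mem κ
        refine ⟨Finset.range M ×ˢ Finset.range M', fun q hq => ?_⟩
        obtain ⟨m, k⟩ := q
        have : M ≤ m ∨ M' ≤ k := by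
          simp only [Finset.mem_product, Finset.mem_range, not_and_or, not_lt] at hq
          omega
        rcases this with h | h
        · exact Ideal.mul_mem_right _ _ (hM (m + 1) (by omega))
        · exact Ideal.mul_mem_left _ _ (Stmt17.mulVec_mem _ (fun i => hM' k h _ i) j)
      have h1 : Stmt17.Tgen Q e b n j = ∑' m, ∑' k, F m k := by
        apply tsum_congr
        intro m
        have hA : ((Q (m + 1)).mulVec (b (n + m + 1))) j
            = ∑' k, ((Q (m + 1)).mulVec (C k (n + m + 1))) j := by
          simp only [Matrix.mulVec, dotProduct]
          have hbv : ∀ i, b (n + m + 1) i = ∑' k, C k (n + m + 1) i := fun i => rfl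
          calc ∑ i, (Q (m + 1)) j i * b (n + m + 1) i
              = ∑ i, ∑' k, (Q (m + 1)) j i * C k (n + m + 1) i := by
                refine Finset.sum_congr rfl fun i _ => ?_
                rw [hbv i]
                exact (Summable.tsum_mul_left _ (hsumC _ i)).symm
            _ = ∑' k, ∑ i, (Q (m + 1)) j i * C k (n + m + 1) i :=
                (Summable.tsum_finsetSum fun i _ => (hsumC _ i).mul_left _).symm
        rw [hA]
        exact (Summable.tsum_mul_left _ (hXs m)).symm
      have h2 : (∑' m, ∑' k, F m k) = ∑' k, ∑' m, F m k := (Summable.tsum_comm huncurry).symm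
      have h4 : ∀ k, (∑' m, F m k) = -(C (k + 1) n j) := by
        intro k
        rw [hCs k n j, neg_neg]
        rfl
      have h6 := Summable.sum_add_tsum_nat_add (f := fun k => C k n j) 1 (hsumC n j)
      simp only [Finset.sum_range_one] at h6
      have hbv : b n j = ∑' k, C k n j := rfl
      have hC0v : C 0 n j = a (n + 1) j := rfl
      rw [h1, h2, tsum_congr h4, tsum_neg]
      rw [hbv, ← h6, hC0v]
      ring
    refine ⟨b, hbtend, ?_⟩
    funext n
    cases n with
    | zero => exact ha0.symm
    | succ n =>
      funext j
      rw [Stmt17.gV_succ, ← hQdef, hfix n j]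
      ring

end
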